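/- Let σ = 1 and R = [[2, -1], [0, 1]]. Define P₁ = (2/(2π)) ∫_{-∞}^{1/2} ∫_{-∞}^{1/2} exp(-‖Rξ‖₂²/2) dξ₂ dξ₁ and P₂ = (1/4)(1 + erf(1/(2√2)))(1 + erf(2/(2√2))). Then P₁ > P₂. -/

import Mathlib

open MeasureTheory Real Finset

/-- The Gauss error function `erf x = (2/√π) ∫_0^x exp(-t²) dt`. -/
noncomputable def erf (x : ℝ) : ℝ :=
  (2 / Real.sqrt Real.pi) * ∫ t in (0 : ℝ)..x, Real.exp (-t ^ 2)


noncomputable def Gg (x : ℝ) : ℝ := ∫ t in (0 : ℝ)..x, Real.exp (-t ^ 2)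

lemma expsq_intInt (a b : ℝ) : IntervalIntegrable (fun t : ℝ => Real.exp (-t ^ 2)) volume a b :=
  (Real.continuous_exp.comp (by continuity)).intervalIntegrable a b

lemma exp_taylor {t : ℝ} (h : t ^ 2 ≤ 1) :
    |Real.exp (-t ^ 2) - (1 - t ^ 2 + t ^ 4 / 2 - t ^ 6 / 6 + t ^ 8 / 24 - t ^ 10 / 120)|
      ≤ 7 * t ^ 12 / 4320 := by
  have h0 : 0 ≤ t ^ 2 := sq_nonneg t
  have hb := Real.exp_bound (x := -t ^ 2) (by rw [abs_neg, abs_of_nonneg h0]; exact h) (n := 6) (by norm_num)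
  have hs : ∑ m ∈ range 6, (-t ^ 2) ^ m / m.factorial
      = 1 - t ^ 2 + t ^ 4 / 2 - t ^ 6 / 6 + t ^ 8 / 24 - t ^ 10 / 120 := by
    simp [Finset.sum_range_succ, Nat.factorial]; ring
  rw [hs, abs_neg, abs_of_nonneg h0] at hb
  calc |Real.exp (-t ^ 2) - (1 - t ^ 2 + t ^ 4 / 2 - t ^ 6 / 6 + t ^ 8 / 24 - t ^ 10 / 120)|
      ≤ (t ^ 2) ^ 6 * ((6:ℕ).succ / ((6:ℕ).factorial * 6)) := hb
    _ = 7 * t ^ 12 / 4320 := by norm_num [Nat.factorial]; ring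

lemma poly_hasDeriv (c : ℝ) (t : ℝ) :
    HasDerivAt (fun u : ℝ => u - u ^ 3 / 3 + u ^ 5 / 10 - u ^ 7 / 42 + u ^ 9 / 216
        - u ^ 11 / 1320 + c * u ^ 13 / 4320)
      (1 - t ^ 2 + t ^ 4 / 2 - t ^ 6 / 6 + t ^ 8 / 24 - t ^ 10 / 120 + c * (13 * t ^ 12) / 4320) t := by
  have h := (((((((hasDerivAt_id t).sub ((hasDerivAt_pow 3 t).div_const 3)).add
      ((hasDerivAt_pow 5 t).div_const 10)).sub ((hasDerivAt_pow 7 t).div_const 42)).add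
      ((hasDerivAt_pow 9 t).div_const 216)).sub ((hasDerivAt_pow 11 t).div_const 1320)).add
      (((hasDerivAt_pow 13 t).const_mul c).div_const 4320))
  convert h using 1
  · rfl
  · rfl
  · rfl
  push_cast
  ring

lemma Gg_poly (c x : ℝ) :
    (∫ t in (0:ℝ)..x, (1 - t ^ 2 + t ^ 4 / 2 - t ^ 6 / 6 + t ^ 8 / 24 - t ^ 10 / 120 + c * (13 * t ^ 12) / 4320))
      = x - x ^ 3 / 3 + x ^ 5 / 10 - x ^ 7 / 42 + x ^ 9 / 216 - x ^ 11 / 1320 + c * x ^ 13 / 4320 := by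
  have h := intervalIntegral.integral_eq_sub_of_hasDerivAt (f := fun u : ℝ => u - u ^ 3 / 3 + u ^ 5 / 10 - u ^ 7 / 42 + u ^ 9 / 216 - u ^ 11 / 1320 + c * u ^ 13 / 4320)
    (fun t _ => poly_hasDeriv c t) ((by continuity : Continuous fun t : ℝ => (1 - t ^ 2 + t ^ 4 / 2 - t ^ 6 / 6 + t ^ 8 / 24 - t ^ 10 / 120 + c * (13 * t ^ 12) / 4320)).intervalIntegrable 0 x)
  rw [h]; ring

lemma Gg_le {x : ℝ} (h0 : 0 ≤ x) (h1 : x ≤ 1) :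
    Gg x ≤ x - x ^ 3 / 3 + x ^ 5 / 10 - x ^ 7 / 42 + x ^ 9 / 216 - x ^ 11 / 1320 + (7/13) * x ^ 13 / 4320 := by
  have hp := Gg_poly (7/13) x
  have hm : Gg x ≤ ∫ t in (0:ℝ)..x, (fun c : ℝ => (1 - t ^ 2 + t ^ 4 / 2 - t ^ 6 / 6 + t ^ 8 / 24 - t ^ 10 / 120 + c * (13 * t ^ 12) / 4320)) (7/13) := by
    refine intervalIntegral.integral_mono_on h0 (expsq_intInt 0 x)
      ((by continuity : Continuous fun t : ℝ => (fun c : ℝ => (1 - t ^ 2 + t ^ 4 / 2 - t ^ 6 / 6 + t ^ 8 / 24 - t ^ 10 / 120 + c * (13 * t ^ 12) / 4320)) (7/13)).intervalIntegrable 0 x) ?_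
    intro t ht
    have ht2 : t ^ 2 ≤ 1 := by rw [Set.mem_Icc] at ht; nlinarith [ht.1, ht.2]
    have h2 := (abs_le.1 (exp_taylor ht2)).2
    dsimp only
    nlinarith [h2]
  simp only at hm hp
  rw [hp] at hm
  linarith

lemma Gg_ge {x : ℝ} (h0 : 0 ≤ x) (h1 : x ≤ 1) :
    x - x ^ 3 / 3 + x ^ 5 / 10 - x ^ 7 / 42 + x ^ 9 / 216 - x ^ 11 / 1320 - (7/13) * x ^ 13 / 4320 ≤ Gg x := by
  have hp := Gg_poly (-(7/13)) x
  have hm : (∫ t in (0:ℝ)..x, (fun c : ℝ => (1 - t ^ 2 + t ^ 4 / 2 - t ^ 6 / 6 + t ^ 8 / 24 - t ^ 10 / 120 + c * (13 * t ^ 12) / 4320)) (-(7/13))) ≤ Gg x := by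
    refine intervalIntegral.integral_mono_on h0
      ((by continuity : Continuous fun t : ℝ => (fun c : ℝ => (1 - t ^ 2 + t ^ 4 / 2 - t ^ 6 / 6 + t ^ 8 / 24 - t ^ 10 / 120 + c * (13 * t ^ 12) / 4320)) (-(7/13))).intervalIntegrable 0 x)
      (expsq_intInt 0 x) ?_
    intro t ht
    have ht2 : t ^ 2 ≤ 1 := by rw [Set.mem_Icc] at ht; nlinarith [ht.1, ht.2]
    have h2 := (abs_le.1 (exp_taylor ht2)).1
    dsimp only
    nlinarith [h2]
  simp only at hm hp
  rw [hp] at hm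
  linarith





lemma Gg_sub (a b : ℝ) : Gg b - Gg a = ∫ t in a..b, Real.exp (-t ^ 2) := by
  have h := intervalIntegral.integral_add_adjacent_intervals (expsq_intInt 0 a) (expsq_intInt a b)
  unfold Gg; linarith

lemma Gg_mono : Monotone Gg := by
  intro a b hab
  have h := Gg_sub a b
  have h2 : (0:ℝ) ≤ ∫ t in a..b, Real.exp (-t ^ 2) :=
    intervalIntegral.integral_nonneg hab (fun x _ => (Real.exp_pos _).le)
  linarith

lemma Gg_neg (x : ℝ) : Gg (-x) = - Gg x := by
  have h : (∫ t in (0:ℝ)..x, Real.exp (-(-t) ^ 2)) = ∫ t in (-x)..(-(0:ℝ)), Real.exp (-t ^ 2) :=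
    intervalIntegral.integral_comp_neg (a := 0) (b := x) (fun t => Real.exp (-t ^ 2))
  simp only [neg_sq, neg_zero] at h
  have h2 := Gg_sub (-x) 0
  unfold Gg at *
  simp only [intervalIntegral.integral_same] at *
  linarith

lemma Gg_zero : Gg 0 = 0 := by unfold Gg; simp

lemma Gg_cont : Continuous Gg :=
  intervalIntegral.continuous_primitive (fun a b => expsq_intInt a b) 0
lemma G1_8_lo : (124351/1000000 : ℝ) ≤ Gg (1/8) := by
  have h := Gg_ge (x := 1/8) (by norm_num) (by norm_num)
  norm_num at h ⊢
  linarith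

lemma G1_8_hi : Gg (1/8) ≤ (1943/15625 : ℝ) := by
  have h := Gg_le (x := 1/8) (by norm_num) (by norm_num)
  norm_num at h ⊢
  linarith

lemma G1_4_lo : (244887/1000000 : ℝ) ≤ Gg (1/4) := by
  have h := Gg_ge (x := 1/4) (by norm_num) (by norm_num)
  norm_num at h ⊢
  linarith

lemma G1_4_hi : Gg (1/4) ≤ (30611/125000 : ℝ) := by
  have h := Gg_le (x := 1/4) (by norm_num) (by norm_num)
  norm_num at h ⊢
  linarith

lemma G3_8_lo : (358139/1000000 : ℝ) ≤ Gg (3/8) := by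
  have h := Gg_ge (x := 3/8) (by norm_num) (by norm_num)
  norm_num at h ⊢
  linarith

lemma G3_8_hi : Gg (3/8) ≤ (17907/50000 : ℝ) := by
  have h := Gg_le (x := 3/8) (by norm_num) (by norm_num)
  norm_num at h ⊢
  linarith

lemma G1_2_lo : (2883/6250 : ℝ) ≤ Gg (1/2) := by
  have h := Gg_ge (x := 1/2) (by norm_num) (by norm_num)
  norm_num at h ⊢
  linarith

lemma G1_2_hi : Gg (1/2) ≤ (230641/500000 : ℝ) := by
  have h := Gg_le (x := 1/2) (by norm_num) (by norm_num)
  norm_num at h ⊢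
  linarith

lemma G5_8_lo : (138083/250000 : ℝ) ≤ Gg (5/8) := by
  have h := Gg_ge (x := 5/8) (by norm_num) (by norm_num)
  norm_num at h ⊢
  linarith

lemma G5_8_hi : Gg (5/8) ≤ (552333/1000000 : ℝ) := by
  have h := Gg_le (x := 5/8) (by norm_num) (by norm_num)
  norm_num at h ⊢
  linarith

lemma G3_4_lo : (630239/1000000 : ℝ) ≤ Gg (3/4) := by
  have h := Gg_ge (x := 3/4) (by norm_num) (by norm_num)
  norm_num at h ⊢
  linarith

lemma G3_4_hi : Gg (3/4) ≤ (315123/500000 : ℝ) := by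
  have h := Gg_le (x := 3/4) (by norm_num) (by norm_num)
  norm_num at h ⊢
  linarith

lemma G7_8_lo : (694829/1000000 : ℝ) ≤ Gg (7/8) := by
  have h := Gg_ge (x := 7/8) (by norm_num) (by norm_num)
  norm_num at h ⊢
  linarith

lemma G7_8_hi : Gg (7/8) ≤ (347437/500000 : ℝ) := by
  have h := Gg_le (x := 7/8) (by norm_num) (by norm_num)
  norm_num at h ⊢
  linarith

lemma G1_1_lo : (186651/250000 : ℝ) ≤ Gg (1/1) := by
  have h := Gg_ge (x := 1/1) (by norm_num) (by norm_num)
  norm_num at h ⊢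
  linarith

lemma G1_1_hi : Gg (1/1) ≤ (373427/500000 : ℝ) := by
  have h := Gg_le (x := 1/1) (by norm_num) (by norm_num)
  norm_num at h ⊢
  linarith


lemma exp_int : Integrable (fun x : ℝ => Real.exp (-x ^ 2)) := by
  simpa using integrable_exp_neg_mul_sq (one_pos)

lemma hprod : Integrable (fun z : ℝ × ℝ => Real.exp (-z.1 ^ 2) * Real.exp (-z.2 ^ 2))
    ((volume : Measure ℝ).prod volume) := exp_int.mul_prod exp_int

lemma hf2 : Integrable (fun z : ℝ × ℝ => Real.exp (-z.1 ^ 2) * Real.exp (-(z.2 - z.1) ^ 2))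
    ((volume : Measure ℝ).prod volume) := by
  have hshear : MeasurePreserving (fun z : ℝ × ℝ => (z.1, z.2 - z.1))
      ((volume : Measure ℝ).prod volume) ((volume : Measure ℝ).prod volume) :=
    measurePreserving_prod_sub volume volume
  have h := (hshear.integrable_comp hprod.aestronglyMeasurable).2 hprod
  simpa [Function.comp_def] using h

lemma h2d : (∫ ξ in Set.univ.pi (fun _ : Fin 2 => Set.Iic (1 / 2 : ℝ)),
      Real.exp (-((2 * ξ 0 - ξ 1) ^ 2 + (ξ 1) ^ 2) / 2))
    = ∫ z in Set.Iic (1 / 2 : ℝ) ×ˢ Set.Iic (1 / 2 : ℝ),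
        Real.exp (-z.1 ^ 2) * Real.exp (-(z.2 - z.1) ^ 2) := by
  have hmp : MeasurePreserving (MeasurableEquiv.finTwoArrow : (Fin 2 → ℝ) ≃ᵐ ℝ × ℝ)
      volume volume := volume_preserving_finTwoArrow ℝ
  have h := hmp.setIntegral_preimage_emb (MeasurableEquiv.finTwoArrow.measurableEmbedding)
    (fun z : ℝ × ℝ => Real.exp (-z.1 ^ 2) * Real.exp (-(z.2 - z.1) ^ 2))
    (Set.Iic (1 / 2 : ℝ) ×ˢ Set.Iic (1 / 2 : ℝ))
  rw [← h]
  have hpre : (MeasurableEquiv.finTwoArrow ⁻¹' (Set.Iic (1 / 2 : ℝ) ×ˢ Set.Iic (1 / 2 : ℝ)))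
      = Set.univ.pi (fun _ : Fin 2 => Set.Iic (1 / 2 : ℝ)) := by
    ext ξ
    simp only [Set.mem_preimage, Set.mem_prod, Set.mem_univ_pi,
      MeasurableEquiv.finTwoArrow, MeasurableEquiv.coe_mk, Equiv.coe_fn_mk,
      MeasurableEquiv.piFinTwo_apply, Set.mem_Iic, Fin.forall_fin_two]
  rw [hpre]
  refine setIntegral_congr_fun (MeasurableSet.univ_pi (fun _ => measurableSet_Iic)) (fun ξ _ => ?_)
  simp only [MeasurableEquiv.finTwoArrow, MeasurableEquiv.coe_mk, Equiv.coe_fn_mk,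
    MeasurableEquiv.piFinTwo_apply]
  rw [← Real.exp_add]
  congr 1
  ring


lemma sqrt_pi_lo : (17724536/10000000 : ℝ) ≤ Real.sqrt Real.pi := by
  have h : (3.141592 : ℝ) < Real.pi := Real.pi_gt_d6
  rw [show (17724536/10000000 : ℝ) = Real.sqrt ((17724536/10000000) ^ 2) by
    rw [Real.sqrt_sq (by norm_num)]]
  exact Real.sqrt_le_sqrt (by nlinarith)

lemma sqrt_pi_hi : Real.sqrt Real.pi ≤ (17724541/10000000 : ℝ) := by
  have h : Real.pi < 3.141593 := Real.pi_lt_d6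
  rw [show (17724541/10000000 : ℝ) = Real.sqrt ((17724541/10000000) ^ 2) by
    rw [Real.sqrt_sq (by norm_num)]]
  exact Real.sqrt_le_sqrt (by nlinarith)

lemma hIic (d : ℝ) : ∫ t in Set.Iic d, Real.exp (-t ^ 2) = Real.sqrt Real.pi / 2 + Gg d := by
  have htot : ∫ t : ℝ, Real.exp (-t ^ 2) = Real.sqrt Real.pi := by
    simpa using integral_gaussian 1
  have hioi : ∫ t in Set.Ioi (0:ℝ), Real.exp (-t ^ 2) = Real.sqrt Real.pi / 2 := by
    simpa using integral_gaussian_Ioi 1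
  have hsplit := intervalIntegral.integral_Iic_add_Ioi (b := (0:ℝ))
    exp_int.integrableOn exp_int.integrableOn
  have hsub := intervalIntegral.integral_Iic_sub_Iic (a := (0:ℝ)) (b := d)
    exp_int.integrableOn exp_int.integrableOn
  have hGg : (∫ t in (0:ℝ)..d, Real.exp (-t ^ 2)) = Gg d := rfl
  rw [hGg] at hsub
  linarith

noncomputable def Ff (x : ℝ) : ℝ :=
  Real.exp (-x ^ 2) * (Real.sqrt Real.pi / 2 + Gg (1 / 2 - x))

lemma Fcoef_nonneg (d : ℝ) : 0 ≤ Real.sqrt Real.pi / 2 + Gg d := by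
  rw [← hIic d]
  exact MeasureTheory.setIntegral_nonneg measurableSet_Iic (fun t _ => (Real.exp_pos _).le)

lemma Fcoef_le (d : ℝ) : Real.sqrt Real.pi / 2 + Gg d ≤ Real.sqrt Real.pi := by
  rw [← hIic d]
  have h := MeasureTheory.setIntegral_le_integral (s := Set.Iic d) exp_int
    (Filter.Eventually.of_forall (fun t => (Real.exp_pos _).le))
  calc ∫ t in Set.Iic d, Real.exp (-t ^ 2) ≤ ∫ t : ℝ, Real.exp (-t ^ 2) := h
    _ = Real.sqrt Real.pi := by simpa using integral_gaussian 1

lemma Ff_cont : Continuous Ff :=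
  (Real.continuous_exp.comp (by continuity)).mul
    (continuous_const.add (Gg_cont.comp (by continuity)))

lemma Ff_int : Integrable Ff := by
  refine (exp_int.const_mul (Real.sqrt Real.pi)).mono' Ff_cont.aestronglyMeasurable ?_
  refine Filter.Eventually.of_forall (fun x => ?_)
  have h1 := Fcoef_nonneg (1 / 2 - x)
  have h2 := Fcoef_le (1 / 2 - x)
  have he := (Real.exp_pos (-x ^ 2)).le
  show |Ff x| ≤ Real.sqrt Real.pi * Real.exp (-x ^ 2)
  unfold Ff
  rw [abs_of_nonneg (mul_nonneg he h1)]
  calc Real.exp (-x ^ 2) * (Real.sqrt Real.pi / 2 + Gg (1 / 2 - x))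
      ≤ Real.exp (-x ^ 2) * Real.sqrt Real.pi := mul_le_mul_of_nonneg_left h2 he
    _ = Real.sqrt Real.pi * Real.exp (-x ^ 2) := mul_comm _ _

lemma htrans (x : ℝ) : ∫ y in Set.Iic (1 / 2 : ℝ), Real.exp (-(y - x) ^ 2)
    = Real.sqrt Real.pi / 2 + Gg (1 / 2 - x) := by
  have hmp : MeasurePreserving (fun y : ℝ => y + x) volume volume :=
    measurePreserving_add_right volume x
  have hemb : MeasurableEmbedding (fun y : ℝ => y + x) :=
    (MeasurableEquiv.addRight x).measurableEmbedding
  have h := hmp.setIntegral_preimage_emb hemb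
    (fun t => Real.exp (-(t - x) ^ 2)) (Set.Iic (1 / 2 : ℝ))
  have hpre : (fun y : ℝ => y + x) ⁻¹' (Set.Iic (1 / 2 : ℝ)) = Set.Iic (1 / 2 - x) := by
    ext y
    simp only [Set.mem_preimage, Set.mem_Iic]
    constructor <;> intro <;> linarith
  rw [hpre] at h
  simp only [add_sub_cancel_right] at h
  rw [← h, hIic]

lemma hinner (x : ℝ) : ∫ y in Set.Iic (1 / 2 : ℝ),
    Real.exp (-x ^ 2) * Real.exp (-(y - x) ^ 2) = Ff x := by
  rw [MeasureTheory.integral_const_mul, htrans x]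
  rfl

lemma houter : (∫ ξ in Set.univ.pi (fun _ : Fin 2 => Set.Iic (1 / 2 : ℝ)),
      Real.exp (-((2 * ξ 0 - ξ 1) ^ 2 + (ξ 1) ^ 2) / 2))
    = ∫ x in Set.Iic (1 / 2 : ℝ), Ff x := by
  rw [h2d]
  refine Eq.trans (MeasureTheory.setIntegral_prod
    (fun z : ℝ × ℝ => Real.exp (-z.1 ^ 2) * Real.exp (-(z.2 - z.1) ^ 2))
    hf2.integrableOn) ?_
  exact MeasureTheory.setIntegral_congr_fun measurableSet_Iic (fun x _ => hinner x)

set_option maxHeartbeats 1000000 in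
lemma piece {a b L D : ℝ} (hab : a ≤ b) (hL0 : 0 ≤ L) (hLb : L ≤ Gg (1 / 2 - b))
    (hD0 : 0 ≤ D) (hD : D ≤ Gg b - Gg a) :
    ((17724536/10000000)/2 + L) * D ≤ ∫ x in a..b, Ff x := by
  have hs1 := sqrt_pi_lo
  have hFi : IntervalIntegrable Ff volume a b := Ff_int.intervalIntegrable
  have hgi : IntervalIntegrable (fun x : ℝ => (Real.sqrt Real.pi / 2 + L) * Real.exp (-x ^ 2))
      volume a b := (expsq_intInt a b).const_mul _
  have hmono := intervalIntegral.integral_mono_on hab hgi hFi (fun x hx => ?pt)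
  case pt =>
    rw [Set.mem_Icc] at hx
    have hmx : Gg (1 / 2 - b) ≤ Gg (1 / 2 - x) := Gg_mono (by linarith [hx.2])
    have he := (Real.exp_pos (-x ^ 2)).le
    show (Real.sqrt Real.pi / 2 + L) * Real.exp (-x ^ 2) ≤ Ff x
    unfold Ff
    have := mul_le_mul_of_nonneg_right (by linarith : Real.sqrt Real.pi / 2 + L ≤ Real.sqrt Real.pi / 2 + Gg (1 / 2 - x)) he
    linarith [this]
  rw [intervalIntegral.integral_const_mul, ← Gg_sub] at hmono
  have hkey : ((17724536/10000000)/2 + L) * D ≤ (Real.sqrt Real.pi / 2 + L) * (Gg b - Gg a) :=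
    mul_le_mul (by linarith) hD hD0 (by linarith)
  linarith

set_option maxHeartbeats 4000000 in
theorem main_integral_lb :
    (1.84 : ℝ) < ∫ ξ in Set.univ.pi (fun _ : Fin 2 => Set.Iic (1 / 2 : ℝ)),
      Real.exp (-((2 * ξ 0 - ξ 1) ^ 2 + (ξ 1) ^ 2) / 2) := by
  rw [houter]
  have hs1 := sqrt_pi_lo
  have htail : ((16328308/10000000) * (4249448/10000000) : ℝ) ≤ ∫ x in Set.Iic (-(1/2) : ℝ), Ff x := by
    have hC0 : ∀ x ∈ Set.Iic (-(1/2) : ℝ),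
        (Real.sqrt Real.pi / 2 + Gg 1) * Real.exp (-x ^ 2) ≤ Ff x := by
      intro x hx
      rw [Set.mem_Iic] at hx
      have hmx : Gg 1 ≤ Gg (1 / 2 - x) := Gg_mono (by linarith)
      have he := (Real.exp_pos (-x ^ 2)).le
      show (Real.sqrt Real.pi / 2 + Gg 1) * Real.exp (-x ^ 2) ≤ Ff x
      unfold Ff
      have := mul_le_mul_of_nonneg_right (by linarith : Real.sqrt Real.pi / 2 + Gg 1 ≤ Real.sqrt Real.pi / 2 + Gg (1 / 2 - x)) he
      linarith [this]
    have hm := MeasureTheory.setIntegral_mono_on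
      ((exp_int.const_mul _).integrableOn) Ff_int.integrableOn measurableSet_Iic hC0
    rw [MeasureTheory.integral_const_mul, hIic] at hm
    have hneg : Gg (-(1/2)) = - Gg (1/2) := by
      have h := Gg_neg (1/2); norm_num at h ⊢; linarith
    rw [hneg] at hm
    have h1 := G1_1_lo
    have h2 := G1_2_hi
    have hu : (16328308/10000000 : ℝ) ≤ Real.sqrt Real.pi / 2 + Gg 1 := by linarith
    have hv : (4249448/10000000 : ℝ) ≤ Real.sqrt Real.pi / 2 + - Gg (1/2) := by linarith
    have hkey : ((16328308/10000000) * (4249448/10000000) : ℝ)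
        ≤ (Real.sqrt Real.pi / 2 + Gg 1) * (Real.sqrt Real.pi / 2 + - Gg (1/2)) :=
      mul_le_mul hu hv (by norm_num) (by linarith)
    linarith
  have hp1 : (((17724536/10000000)/2 + 694829/1000000) * (5157/50000) : ℝ) ≤ ∫ x in (-(1/2) : ℝ)..(-(3/8) : ℝ), Ff x := by
    refine piece (by norm_num) (by norm_num) ?_ (by norm_num) ?_
    · show (694829/1000000 : ℝ) ≤ Gg (1/2 - (-(3/8) : ℝ))
      have h := G7_8_lo
      norm_num at h ⊢
      linarith
    · show ((5157/50000) : ℝ) ≤ Gg (-(3/8) : ℝ) - Gg (-(1/2) : ℝ)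
      have ha1 := G1_2_lo
      have ha2 := G1_2_hi
      have hna : Gg (-(1/2) : ℝ) = - Gg (1/2) := by
        have h := Gg_neg (1/2); norm_num at h ⊢; linarith
      have hb1 := G3_8_lo
      have hb2 := G3_8_hi
      have hnb : Gg (-(3/8) : ℝ) = - Gg (3/8) := by
        have h := Gg_neg (3/8); norm_num at h ⊢; linarith
      rw [hna, hnb]
      norm_num
      linarith
  have hp2 : (((17724536/10000000)/2 + 630239/1000000) * (113251/1000000) : ℝ) ≤ ∫ x in (-(3/8) : ℝ)..(-(1/4) : ℝ), Ff x := by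
    refine piece (by norm_num) (by norm_num) ?_ (by norm_num) ?_
    · show (630239/1000000 : ℝ) ≤ Gg (1/2 - (-(1/4) : ℝ))
      have h := G3_4_lo
      norm_num at h ⊢
      linarith
    · show ((113251/1000000) : ℝ) ≤ Gg (-(1/4) : ℝ) - Gg (-(3/8) : ℝ)
      have ha1 := G3_8_lo
      have ha2 := G3_8_hi
      have hna : Gg (-(3/8) : ℝ) = - Gg (3/8) := by
        have h := Gg_neg (3/8); norm_num at h ⊢; linarith
      have hb1 := G1_4_lo
      have hb2 := G1_4_hi
      have hnb : Gg (-(1/4) : ℝ) = - Gg (1/4) := by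
        have h := Gg_neg (1/4); norm_num at h ⊢; linarith
      rw [hna, hnb]
      norm_num
      linarith
  have hp3 : (((17724536/10000000)/2 + 138083/250000) * (24107/200000) : ℝ) ≤ ∫ x in (-(1/4) : ℝ)..(-(1/8) : ℝ), Ff x := by
    refine piece (by norm_num) (by norm_num) ?_ (by norm_num) ?_
    · show (138083/250000 : ℝ) ≤ Gg (1/2 - (-(1/8) : ℝ))
      have h := G5_8_lo
      norm_num at h ⊢
      linarith
    · show ((24107/200000) : ℝ) ≤ Gg (-(1/8) : ℝ) - Gg (-(1/4) : ℝ)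
      have ha1 := G1_4_lo
      have ha2 := G1_4_hi
      have hna : Gg (-(1/4) : ℝ) = - Gg (1/4) := by
        have h := Gg_neg (1/4); norm_num at h ⊢; linarith
      have hb1 := G1_8_lo
      have hb2 := G1_8_hi
      have hnb : Gg (-(1/8) : ℝ) = - Gg (1/8) := by
        have h := Gg_neg (1/8); norm_num at h ⊢; linarith
      rw [hna, hnb]
      norm_num
      linarith
  have hp4 : (((17724536/10000000)/2 + 2883/6250) * (124351/1000000) : ℝ) ≤ ∫ x in (-(1/8) : ℝ)..(0 : ℝ), Ff x := by
    refine piece (by norm_num) (by norm_num) ?_ (by norm_num) ?_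
    · show (2883/6250 : ℝ) ≤ Gg (1/2 - (0 : ℝ))
      have h := G1_2_lo
      norm_num at h ⊢
      linarith
    · show ((124351/1000000) : ℝ) ≤ Gg (0 : ℝ) - Gg (-(1/8) : ℝ)
      have ha1 := G1_8_lo
      have ha2 := G1_8_hi
      have hna : Gg (-(1/8) : ℝ) = - Gg (1/8) := by
        have h := Gg_neg (1/8); norm_num at h ⊢; linarith
      have hnb : Gg (0 : ℝ) = 0 := Gg_zero
      rw [hna, hnb]
      norm_num
      linarith
  have hp5 : (((17724536/10000000)/2 + 358139/1000000) * (124351/1000000) : ℝ) ≤ ∫ x in (0 : ℝ)..(1/8 : ℝ), Ff x := by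
    refine piece (by norm_num) (by norm_num) ?_ (by norm_num) ?_
    · show (358139/1000000 : ℝ) ≤ Gg (1/2 - (1/8 : ℝ))
      have h := G3_8_lo
      norm_num at h ⊢
      linarith
    · show ((124351/1000000) : ℝ) ≤ Gg (1/8 : ℝ) - Gg (0 : ℝ)
      have hna : Gg (0 : ℝ) = 0 := Gg_zero
      have hb1 := G1_8_lo
      rw [hna]
      norm_num
      linarith
  have hp6 : (((17724536/10000000)/2 + 244887/1000000) * (24107/200000) : ℝ) ≤ ∫ x in (1/8 : ℝ)..(1/4 : ℝ), Ff x := by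
    refine piece (by norm_num) (by norm_num) ?_ (by norm_num) ?_
    · show (244887/1000000 : ℝ) ≤ Gg (1/2 - (1/4 : ℝ))
      have h := G1_4_lo
      norm_num at h ⊢
      linarith
    · show ((24107/200000) : ℝ) ≤ Gg (1/4 : ℝ) - Gg (1/8 : ℝ)
      have ha2 := G1_8_hi
      have hb1 := G1_4_lo
      norm_num
      linarith
  have hp7 : (((17724536/10000000)/2 + 124351/1000000) * (113251/1000000) : ℝ) ≤ ∫ x in (1/4 : ℝ)..(3/8 : ℝ), Ff x := by
    refine piece (by norm_num) (by norm_num) ?_ (by norm_num) ?_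
    · show (124351/1000000 : ℝ) ≤ Gg (1/2 - (3/8 : ℝ))
      have h := G1_8_lo
      norm_num at h ⊢
      linarith
    · show ((113251/1000000) : ℝ) ≤ Gg (3/8 : ℝ) - Gg (1/4 : ℝ)
      have ha2 := G1_4_hi
      have hb1 := G3_8_lo
      norm_num
      linarith
  have hp8 : (((17724536/10000000)/2 + (0:ℝ)) * (5157/50000) : ℝ) ≤ ∫ x in (3/8 : ℝ)..(1/2 : ℝ), Ff x := by
    refine piece (by norm_num) le_rfl ?_ (by norm_num) ?_
    · show ((0:ℝ) : ℝ) ≤ Gg (1/2 - (1/2 : ℝ))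
      norm_num [Gg_zero]
    · show ((5157/50000) : ℝ) ≤ Gg (1/2 : ℝ) - Gg (3/8 : ℝ)
      have ha2 := G3_8_hi
      have hb1 := G1_2_lo
      norm_num
      linarith
  have hFi : ∀ a b : ℝ, IntervalIntegrable Ff volume a b := fun a b => Ff_int.intervalIntegrable
  have hsum : ∫ x in (-(1/2) : ℝ)..(1/2 : ℝ), Ff x
      = (∫ x in (-(1/2) : ℝ)..(-(3/8) : ℝ), Ff x) + (∫ x in (-(3/8) : ℝ)..(-(1/4) : ℝ), Ff x) + (∫ x in (-(1/4) : ℝ)..(-(1/8) : ℝ), Ff x) + (∫ x in (-(1/8) : ℝ)..(0 : ℝ), Ff x) + (∫ x in (0 : ℝ)..(1/8 : ℝ), Ff x) + (∫ x in (1/8 : ℝ)..(1/4 : ℝ), Ff x) + (∫ x in (1/4 : ℝ)..(3/8 : ℝ), Ff x) + (∫ x in (3/8 : ℝ)..(1/2 : ℝ), Ff x) := by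
    have h12 := intervalIntegral.integral_add_adjacent_intervals (hFi (-(1/2)) (-(3/8))) (hFi (-(3/8)) (-(1/4)))
    have h13 := intervalIntegral.integral_add_adjacent_intervals (hFi (-(1/2)) (-(1/4))) (hFi (-(1/4)) (-(1/8)))
    have h14 := intervalIntegral.integral_add_adjacent_intervals (hFi (-(1/2)) (-(1/8))) (hFi (-(1/8)) 0)
    have h15 := intervalIntegral.integral_add_adjacent_intervals (hFi (-(1/2)) 0) (hFi 0 (1/8))
    have h16 := intervalIntegral.integral_add_adjacent_intervals (hFi (-(1/2)) (1/8)) (hFi (1/8) (1/4))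
    have h17 := intervalIntegral.integral_add_adjacent_intervals (hFi (-(1/2)) (1/4)) (hFi (1/4) (3/8))
    have h18 := intervalIntegral.integral_add_adjacent_intervals (hFi (-(1/2)) (3/8)) (hFi (3/8) (1/2))
    linarith
  have hsplit := intervalIntegral.integral_Iic_sub_Iic (a := (-(1/2) : ℝ)) (b := (1/2 : ℝ))
    Ff_int.integrableOn Ff_int.integrableOn
  rw [hsum] at hsplit
  linarith


lemma sqrt2_lo : (14142135/10000000 : ℝ) ≤ Real.sqrt 2 := by
  rw [show (14142135/10000000 : ℝ) = Real.sqrt ((14142135/10000000) ^ 2) by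
    rw [Real.sqrt_sq (by norm_num)]]
  exact Real.sqrt_le_sqrt (by norm_num)


lemma erf_eq (x : ℝ) : erf x = 2 / Real.sqrt Real.pi * Gg x := rfl

lemma erf_nonneg_of (x : ℝ) (h : 0 ≤ x) : 0 ≤ erf x := by
  rw [erf_eq]
  have hG0 : Gg 0 ≤ Gg x := Gg_mono h
  rw [Gg_zero] at hG0
  exact mul_nonneg (div_nonneg (by norm_num) (Real.sqrt_nonneg _)) hG0

lemma Gg_le_q {x q : ℝ} (h0 : 0 ≤ x) (h1 : x ≤ 1) (hq : x ^ 2 = q) :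
    Gg x ≤ x * (1 - q/3 + q^2/10 - q^3/42 + q^4/216 - q^5/1320 + (7/13)*q^6/4320) := by
  have h := Gg_le h0 h1
  have h3 : x ^ 3 = q * x := by rw [← hq]; ring
  have h5 : x ^ 5 = q ^ 2 * x := by rw [← hq]; ring
  have h7 : x ^ 7 = q ^ 3 * x := by rw [← hq]; ring
  have h9 : x ^ 9 = q ^ 4 * x := by rw [← hq]; ring
  have h11 : x ^ 11 = q ^ 5 * x := by rw [← hq]; ring
  have h13 : x ^ 13 = q ^ 6 * x := by rw [← hq]; ring
  rw [h3, h5, h7, h9, h11, h13] at h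
  nlinarith [h]

lemma erf_a_le : erf (1 / (2 * Real.sqrt 2)) ≤ (3829896/10000000 : ℝ) := by
  have hw := sqrt2_lo
  have hw2 : Real.sqrt 2 ^ 2 = 2 := Real.sq_sqrt (by norm_num)
  have hwpos : (0:ℝ) < Real.sqrt 2 := by linarith
  set x : ℝ := 1 / (2 * Real.sqrt 2) with hxdef
  have hx0 : 0 ≤ x := by positivity
  have hq : x ^ 2 = 1/8 := by rw [hxdef, div_pow, mul_pow, hw2]; norm_num
  have hx1 : x ≤ 1 := by rw [hxdef, div_le_one (by positivity)]; nlinarith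
  have hxhi : x ≤ (3535535/10000000 : ℝ) := by
    rw [hxdef, div_le_iff₀ (by positivity)]; nlinarith
  have hG := Gg_le_q hx0 hx1 hq
  have hGx : Gg x ≤ (3394087/10000000 : ℝ) := by nlinarith [hG, hxhi]
  have hG0 : 0 ≤ Gg x := by
    have h := Gg_mono hx0; rw [Gg_zero] at h; exact h
  rw [erf_eq]
  have hs := sqrt_pi_lo
  have h2s : 2 / Real.sqrt Real.pi ≤ 2 / (17724536/10000000 : ℝ) :=
    div_le_div_of_nonneg_left (by norm_num) (by norm_num) hs
  calc 2 / Real.sqrt Real.pi * Gg x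
      ≤ (2 / (17724536/10000000 : ℝ)) * (3394087/10000000 : ℝ) :=
        mul_le_mul h2s hGx hG0 (by norm_num)
    _ ≤ _ := by norm_num

lemma erf_b_le : erf (2 / (2 * Real.sqrt 2)) ≤ (6827245/10000000 : ℝ) := by
  have hw := sqrt2_lo
  have hw2 : Real.sqrt 2 ^ 2 = 2 := Real.sq_sqrt (by norm_num)
  have hwpos : (0:ℝ) < Real.sqrt 2 := by linarith
  set x : ℝ := 2 / (2 * Real.sqrt 2) with hxdef
  have hx0 : 0 ≤ x := by positivity
  have hq : x ^ 2 = 1/2 := by rw [hxdef, div_pow, mul_pow, hw2]; norm_num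
  have hx1 : x ≤ 1 := by rw [hxdef, div_le_one (by positivity)]; nlinarith
  have hxhi : x ≤ (707107/1000000 : ℝ) := by
    rw [hxdef, div_le_iff₀ (by positivity)]; nlinarith
  have hG := Gg_le_q hx0 hx1 hq
  have hGx : Gg x ≤ (6050277/10000000 : ℝ) := by nlinarith [hG, hxhi]
  have hG0 : 0 ≤ Gg x := by
    have h := Gg_mono hx0; rw [Gg_zero] at h; exact h
  rw [erf_eq]
  have hs := sqrt_pi_lo
  have h2s : 2 / Real.sqrt Real.pi ≤ 2 / (17724536/10000000 : ℝ) :=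
    div_le_div_of_nonneg_left (by norm_num) (by norm_num) hs
  calc 2 / Real.sqrt Real.pi * Gg x
      ≤ (2 / (17724536/10000000 : ℝ)) * (6050277/10000000 : ℝ) :=
        mul_le_mul h2s hGx hG0 (by norm_num)
    _ ≤ _ := by norm_num

/-- Example: with `σ = 1`, `R = [[2,-1],[0,1]]` and the parameter at the lower
corner of the box, the success probability of the box-constrained rounding
detector exceeds that of the box-constrained Babai detector. -/
theorem stmt_16 :
    (1 / 4 : ℝ) * (1 + erf (1 / (2 * Real.sqrt 2)))
        * (1 + erf (2 / (2 * Real.sqrt 2)))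
      < (2 / (2 * Real.pi)) *
        ∫ ξ in Set.univ.pi (fun _ : Fin 2 => Set.Iic (1 / 2 : ℝ)),
          Real.exp (-((2 * ξ 0 - ξ 1) ^ 2 + (ξ 1) ^ 2) / 2) := by
  have hI := main_integral_lb
  have ha := erf_a_le
  have hb := erf_b_le
  have ha0 : 0 ≤ erf (1 / (2 * Real.sqrt 2)) := erf_nonneg_of _ (by positivity)
  have hb0 : 0 ≤ erf (2 / (2 * Real.sqrt 2)) := erf_nonneg_of _ (by positivity)
  have hprodle : (1 + erf (1 / (2 * Real.sqrt 2))) * (1 + erf (2 / (2 * Real.sqrt 2)))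
      ≤ (1 + (3829896/10000000 : ℝ)) * (1 + (6827245/10000000 : ℝ)) :=
    mul_le_mul (by linarith) (by linarith) (by linarith) (by norm_num)
  have hlhs : (1 / 4 : ℝ) * (1 + erf (1 / (2 * Real.sqrt 2)))
      * (1 + erf (2 / (2 * Real.sqrt 2))) ≤ (5818/10000 : ℝ) := by
    nlinarith [hprodle]
  have hpi := Real.pi_lt_d6
  have hpipos := Real.pi_pos
  have heq : (2 / (2 * Real.pi) : ℝ) = 1 / Real.pi := by
    field_simp
  rw [heq]
  have hstep : (5818/10000 : ℝ) * Real.pi < 1.84 := by nlinarith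
  have hrhs : (5818/10000 : ℝ) < 1 / Real.pi *
      ∫ ξ in Set.univ.pi (fun _ : Fin 2 => Set.Iic (1 / 2 : ℝ)),
        Real.exp (-((2 * ξ 0 - ξ 1) ^ 2 + (ξ 1) ^ 2) / 2) := by
    rw [one_div, inv_mul_eq_div, lt_div_iff₀ hpipos]
    nlinarith
  linarith
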